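/- arXiv:2401.13236 — 3 statements merged into one kernel-verified Lean document; each statement's English description precedes it below -/
import Mathlib

section
/- Let X be a measurable space, let P and Q be probability measures on X, and let h, f, g : X → ℝ be measurable functions with values in [0,1]. Then ∫ |h − f| dP ≤ ∫ |h − g| dQ + min( ∫ |g − f| dP , ∫ |g − f| dQ ) + d₁(P,Q). (This is the risk-decomposition form of Theorem 1: h is the learned predictor, f the true labeling function of client i's test distribution P, g the true labeling function of the group's training distribution Q, the middle term is the constant λ, and d₁ is the distribution divergence term.) -/
open MeasureTheory

lemma add_jordan_eq {X : Type*} [MeasurableSpace X] (P Q : Measure X)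
    [IsFiniteMeasure P] [IsFiniteMeasure Q] :
    P + (P.toSignedMeasure - Q.toSignedMeasure).toJordanDecomposition.negPart
      = Q + (P.toSignedMeasure - Q.toSignedMeasure).toJordanDecomposition.posPart := by
  set s := P.toSignedMeasure - Q.toSignedMeasure with hs
  ext E hE
  have h1 : s.toJordanDecomposition.toSignedMeasure = s :=
    SignedMeasure.toSignedMeasure_toJordanDecomposition s
  have h2 : s E = (s.toJordanDecomposition.posPart E).toReal -
      (s.toJordanDecomposition.negPart E).toReal := by
    conv_lhs => rw [← h1]
    exact Measure.toSignedMeasure_sub_apply hE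
  have h3 : s E = (P E).toReal - (Q E).toReal := Measure.toSignedMeasure_sub_apply hE
  have hPfin : P E ≠ ⊤ := measure_ne_top _ _
  have hQfin : Q E ≠ ⊤ := measure_ne_top _ _
  have hpfin : s.toJordanDecomposition.posPart E ≠ ⊤ := measure_ne_top _ _
  have hnfin : s.toJordanDecomposition.negPart E ≠ ⊤ := measure_ne_top _ _
  simp only [Measure.add_apply]
  refine (ENNReal.toReal_eq_toReal_iff' (by finiteness) (by finiteness)).mp ?_
  rw [ENNReal.toReal_add hPfin hnfin, ENNReal.toReal_add hQfin hpfin]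
  have := h2.symm.trans h3
  linarith

lemma integral_le_integral_add_tv {X : Type*} [MeasurableSpace X] (P Q : Measure X)
    [IsFiniteMeasure P] [IsFiniteMeasure Q] (u : X → ℝ) (hu : Measurable u)
    (h0 : ∀ x, 0 ≤ u x) (h1 : ∀ x, u x ≤ 1) :
    ∫ x, u x ∂P ≤ ∫ x, u x ∂Q +
      ((P.toSignedMeasure - Q.toSignedMeasure).totalVariation Set.univ).toReal := by
  set s := P.toSignedMeasure - Q.toSignedMeasure with hs
  set μp := s.toJordanDecomposition.posPart with hμp
  set μn := s.toJordanDecomposition.negPart with hμn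
  have hint : ∀ (μ : Measure X) [IsFiniteMeasure μ], Integrable u μ := by
    intro μ _
    refine (integrable_const (1 : ℝ)).mono' hu.aestronglyMeasurable (ae_of_all _ fun x => ?_)
    rw [Real.norm_eq_abs, abs_of_nonneg (h0 x)]
    exact h1 x
  have heq : ∫ x, u x ∂P + ∫ x, u x ∂μn = ∫ x, u x ∂Q + ∫ x, u x ∂μp := by
    rw [← integral_add_measure (hint P) (hint μn), ← integral_add_measure (hint Q) (hint μp),
      add_jordan_eq P Q]
  have hneg : 0 ≤ ∫ x, u x ∂μn := integral_nonneg h0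
  have hpos : ∫ x, u x ∂μp ≤ (μp Set.univ).toReal := by
    calc ∫ x, u x ∂μp ≤ ∫ _, (1 : ℝ) ∂μp := integral_mono (hint μp) (integrable_const 1) h1
    _ = (μp Set.univ).toReal := by simp; rfl
  have htv : (μp Set.univ).toReal ≤ (s.totalVariation Set.univ).toReal := by
    refine ENNReal.toReal_le_toReal (measure_ne_top _ _) ?_ |>.mpr ?_
    · rw [SignedMeasure.totalVariation, Measure.add_apply]
      exact ENNReal.add_ne_top.mpr ⟨measure_ne_top _ _, measure_ne_top _ _⟩
    · rw [SignedMeasure.totalVariation, Measure.add_apply]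
      exact le_self_add
  linarith

/-- Risk-decomposition form of Theorem 1: for probability measures `P` (test distribution of
client `i`) and `Q` (training distribution of the group), learned predictor `h`, true labeling
functions `f` (of `P`) and `g` (of `Q`), all with values in `[0,1]`,
`ε_P(h,f) ≤ ε_Q(h,g) + min(ε_P(g,f), ε_Q(g,f)) + d₁(P,Q)`, where `d₁(P,Q)` is the total mass of
the total-variation measure of the signed measure `P - Q`. -/
theorem risk_decomposition
    {X : Type*} [MeasurableSpace X] (P Q : Measure X)
    [IsProbabilityMeasure P] [IsProbabilityMeasure Q]
    (h f g : X → ℝ) (hh : Measurable h) (hf : Measurable f) (hg : Measurable g)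
    (hh01 : ∀ x, h x ∈ Set.Icc (0 : ℝ) 1)
    (hf01 : ∀ x, f x ∈ Set.Icc (0 : ℝ) 1)
    (hg01 : ∀ x, g x ∈ Set.Icc (0 : ℝ) 1) :
    ∫ x, |h x - f x| ∂P ≤
      (∫ x, |h x - g x| ∂Q) +
        min (∫ x, |g x - f x| ∂P) (∫ x, |g x - f x| ∂Q) +
        ((P.toSignedMeasure - Q.toSignedMeasure).totalVariation Set.univ).toReal := by
  have habs : ∀ (a b : X → ℝ), (∀ x, a x ∈ Set.Icc (0:ℝ) 1) → (∀ x, b x ∈ Set.Icc (0:ℝ) 1) →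
      ∀ x, |a x - b x| ≤ 1 := by
    intro a b ha hb x
    have h1 := ha x; have h2 := hb x
    rw [Set.mem_Icc] at h1 h2
    rw [abs_le]; constructor <;> linarith
  have hint : ∀ (a b : X → ℝ), Measurable a → Measurable b → (∀ x, |a x - b x| ≤ 1) →
      ∀ (μ : Measure X) [IsFiniteMeasure μ], Integrable (fun x => |a x - b x|) μ := by
    intro a b ha hb hbd μ _
    refine (integrable_const (1 : ℝ)).mono' ((ha.sub hb).abs).aestronglyMeasurable
      (ae_of_all _ fun x => ?_)
    rw [Real.norm_eq_abs, abs_abs]; exact hbd x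
  have bhf := habs h f hh01 hf01
  have bhg := habs h g hh01 hg01
  have bgf := habs g f hg01 hf01
  -- triangle inequality under a measure μ
  have tri : ∀ (μ : Measure X) [IsFiniteMeasure μ],
      ∫ x, |h x - f x| ∂μ ≤ ∫ x, |h x - g x| ∂μ + ∫ x, |g x - f x| ∂μ := by
    intro μ _
    rw [← integral_add (hint h g hh hg bhg μ) (hint g f hg hf bgf μ)]
    refine integral_mono (hint h f hh hf bhf μ)
      ((hint h g hh hg bhg μ).add (hint g f hg hf bgf μ)) fun x => ?_
    calc |h x - f x| = |(h x - g x) + (g x - f x)| := by ring_nf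
    _ ≤ |h x - g x| + |g x - f x| := abs_add_le _ _
  -- key d1 bounds
  have key_hg : ∫ x, |h x - g x| ∂P ≤ ∫ x, |h x - g x| ∂Q +
      ((P.toSignedMeasure - Q.toSignedMeasure).totalVariation Set.univ).toReal :=
    integral_le_integral_add_tv P Q _ (hh.sub hg).abs (fun x => abs_nonneg _) bhg
  have key_hf : ∫ x, |h x - f x| ∂P ≤ ∫ x, |h x - f x| ∂Q +
      ((P.toSignedMeasure - Q.toSignedMeasure).totalVariation Set.univ).toReal :=
    integral_le_integral_add_tv P Q _ (hh.sub hf).abs (fun x => abs_nonneg _) bhf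
  rcases le_total (∫ x, |g x - f x| ∂P) (∫ x, |g x - f x| ∂Q) with hle | hle
  · rw [min_eq_left hle]
    have := tri P
    linarith
  · rw [min_eq_right hle]
    have := tri Q
    linarith
end

section
/- Let E = EuclideanSpace ℝ (Fin M) and let J_1, …, J_N : E → ℝ be differentiable with L-Lipschitz gradient. Suppose the clients {1, …, N} are partitioned into groups, with S_i denoting the group containing client i, and let a_j ≥ 0 be weights with Σ_{j ∈ S_i} a_j = 1 for each group. Fix current iterates w_1, …, w_N ∈ E and a step size η > 0. On a probability space, let g_1, …, g_N : Ω → E be measurable square-integrable random vectors with 𝔼[g_j] = ∇J_j(w_j) and 𝔼[‖g_j − ∇J_j(w_j)‖²] ≤ σ² for every j. Each client updates w_i⁺ = w_i − η Σ_{j ∈ S_i} a_j g_j. Then Σ_{i=1}^{N} 𝔼[J_i(w_i⁺)] − Σ_{i=1}^{N} J_i(w_i) ≤ − η Σ_{i=1}^{N} ⟨∇J_i(w_i), Σ_{j ∈ S_i} a_j ∇J_j(w_j)⟩ + (L η² / 2) Σ_{i=1}^{N} ‖Σ_{j ∈ S_i} a_j ∇J_j(w_j)‖² + (L η² N / 2)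 σ². (Lemma 1 of the paper: the one-epoch expected loss decay of all clients under grouped aggregation.) -/
open MeasureTheory
open scoped RealInnerProductSpace ENNReal

lemma descent_abs {F : Type*} [NormedAddCommGroup F] [InnerProductSpace ℝ F] [CompleteSpace F]
    (f : F → ℝ) (L : ℝ) (hL : 0 ≤ L) (hdiff : Differentiable ℝ f)
    (hlip : ∀ w₁ w₂, ‖gradient f w₁ - gradient f w₂‖ ≤ L * ‖w₁ - w₂‖)
    (x y : F) : |f y - f x - ⟪gradient f x, y - x⟫| ≤ L / 2 * ‖y - x‖ ^ 2 := by
  set v := y - x with hv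
  set φ' : ℝ → ℝ := fun t => ⟪gradient f (x + t • v), v⟫ with hφ'def
  have hψ : ∀ t : ℝ, HasDerivAt (fun t : ℝ => x + t • v) v t := fun t => by
    simpa using ((hasDerivAt_id t).smul_const v).const_add x
  have hφ : ∀ t : ℝ, HasDerivAt (fun t : ℝ => f (x + t • v)) (φ' t) t := by
    intro t
    have h2 := ((hdiff (x + t • v)).hasGradientAt).hasFDerivAt
    have := h2.comp_hasDerivAt t (hψ t)
    exact this
  have hgradcont : Continuous (gradient f) := by
    rcases eq_or_lt_of_le hL with h0 | hpos
    · have : ∀ z, gradient f z = gradient f 0 := by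
        intro z
        have h1 := hlip z 0
        rw [← h0, zero_mul] at h1
        have h2 : ‖gradient f z - gradient f 0‖ = 0 := le_antisymm h1 (norm_nonneg _)
        rwa [norm_eq_zero, sub_eq_zero] at h2
      have h2 : gradient f = fun _ => gradient f 0 := funext this
      rw [h2]; exact continuous_const
    · exact (LipschitzWith.of_dist_le_mul (K := ⟨L, hL⟩) (fun a b => by
        rw [dist_eq_norm, dist_eq_norm]; exact hlip a b)).continuous
  have hφ'cont : Continuous φ' := by
    apply Continuous.inner
    · exact hgradcont.comp (by fun_prop)
    · exact continuous_const
  have hFTC : ∫ t in (0:ℝ)..1, φ' t = f y - f x := by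
    have := intervalIntegral.integral_eq_sub_of_hasDerivAt
      (f := fun t : ℝ => f (x + t • v)) (f' := φ') (a := 0) (b := 1)
      (fun t _ => hφ t) (hφ'cont.intervalIntegrable 0 1)
    simpa [hv] using this
  have hφ'0 : φ' 0 = ⟪gradient f x, v⟫ := by simp [φ']
  have key : f y - f x - ⟪gradient f x, v⟫ = ∫ t in (0:ℝ)..1, (φ' t - φ' 0) := by
    rw [intervalIntegral.integral_sub (hφ'cont.intervalIntegrable 0 1)
      (intervalIntegrable_const), hFTC]
    simp [hφ'0]
  have hbound : ∀ t ∈ Set.Icc (0:ℝ) 1, |φ' t - φ' 0| ≤ L * t * ‖v‖ ^ 2 := by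
    intro t ht
    have : φ' t - φ' 0 = ⟪gradient f (x + t • v) - gradient f x, v⟫ := by
      simp [φ', inner_sub_left]
    rw [this]
    calc |⟪gradient f (x + t • v) - gradient f x, v⟫|
        ≤ ‖gradient f (x + t • v) - gradient f x‖ * ‖v‖ := abs_real_inner_le_norm _ _
      _ ≤ (L * ‖(x + t • v) - x‖) * ‖v‖ := by
          gcongr; exact hlip _ _
      _ = L * t * ‖v‖ ^ 2 := by
          rw [add_sub_cancel_left, norm_smul, Real.norm_eq_abs, abs_of_nonneg ht.1]
          ring
  calc |f y - f x - ⟪gradient f x, v⟫|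
      = |∫ t in (0:ℝ)..1, (φ' t - φ' 0)| := by rw [key]
    _ ≤ ∫ t in (0:ℝ)..1, |φ' t - φ' 0| :=
        intervalIntegral.abs_integral_le_integral_abs zero_le_one
    _ ≤ ∫ t in (0:ℝ)..1, L * t * ‖v‖ ^ 2 := by
        apply intervalIntegral.integral_mono_on zero_le_one
        · exact ((hφ'cont.sub continuous_const).abs).intervalIntegrable 0 1
        · exact (Continuous.intervalIntegrable (by fun_prop) 0 1)
        · exact hbound
    _ = L / 2 * ‖v‖ ^ 2 := by
        have : ∫ t in (0:ℝ)..1, L * t * ‖v‖ ^ 2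
            = (L * ‖v‖ ^ 2) * ∫ t in (0:ℝ)..1, t := by
          rw [← intervalIntegral.integral_const_mul]
          congr 1; ext t; ring
        rw [this, integral_id]; ring
lemma jensen_sq_norm {F : Type*} [NormedAddCommGroup F] [InnerProductSpace ℝ F]
    {ι : Type*} (s : Finset ι) (a : ι → ℝ) (ha : ∀ j, 0 ≤ a j)
    (hsum : ∑ j ∈ s, a j = 1) (x : ι → F) :
    ‖∑ j ∈ s, a j • x j‖ ^ 2 ≤ ∑ j ∈ s, a j * ‖x j‖ ^ 2 := by
  have h1 : ‖∑ j ∈ s, a j • x j‖ ≤ ∑ j ∈ s, a j * ‖x j‖ := by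
    refine (norm_sum_le s _).trans (le_of_eq ?_)
    refine Finset.sum_congr rfl fun j _ => ?_
    rw [norm_smul, Real.norm_eq_abs, abs_of_nonneg (ha j)]
  have h2 : (∑ j ∈ s, a j * ‖x j‖) ^ 2 ≤
      (∑ j ∈ s, Real.sqrt (a j) ^ 2) * ∑ j ∈ s, (Real.sqrt (a j) * ‖x j‖) ^ 2 := by
    have hcs := Finset.sum_mul_sq_le_sq_mul_sq s (fun j => Real.sqrt (a j))
      (fun j => Real.sqrt (a j) * ‖x j‖)
    calc (∑ j ∈ s, a j * ‖x j‖) ^ 2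
        = (∑ j ∈ s, Real.sqrt (a j) * (Real.sqrt (a j) * ‖x j‖)) ^ 2 := by
          congr 1; refine Finset.sum_congr rfl fun j _ => ?_
          rw [← mul_assoc, Real.mul_self_sqrt (ha j)]
      _ ≤ _ := hcs
  have h3 : (∑ j ∈ s, Real.sqrt (a j) ^ 2) = 1 := by
    rw [← hsum]; exact Finset.sum_congr rfl fun j _ => Real.sq_sqrt (ha j)
  have h4 : ∑ j ∈ s, (Real.sqrt (a j) * ‖x j‖) ^ 2 = ∑ j ∈ s, a j * ‖x j‖ ^ 2 := by
    refine Finset.sum_congr rfl fun j _ => ?_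
    rw [mul_pow, Real.sq_sqrt (ha j)]
  calc ‖∑ j ∈ s, a j • x j‖ ^ 2 ≤ (∑ j ∈ s, a j * ‖x j‖) ^ 2 := by
        apply pow_le_pow_left₀ (norm_nonneg _) h1
    _ ≤ _ := by rw [h3, one_mul, h4] at h2; exact h2

/-- Lemma 1 of the paper: one-epoch expected loss decay of all clients under grouped
aggregation.  Clients `1, …, N` with `L`-smooth losses `J i` are partitioned into groups
(`S i` is the group of client `i`), weights `a j ≥ 0` sum to `1` over each group, and each
client updates `wᵢ⁺ = wᵢ − η Σ_{j ∈ S i} a j g j`, where `g j` is an unbiased square-integrable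
stochastic gradient of client `j` at `w j` with variance at most `σ²`.  Then the sum of expected
losses decays as stated. -/
theorem lemma1_grouped_descent
    {M N : ℕ} (J : Fin N → EuclideanSpace ℝ (Fin M) → ℝ) (L : ℝ) (hL : 0 < L)
    (hdiff : ∀ i, Differentiable ℝ (J i))
    (hlip : ∀ i w₁ w₂, ‖gradient (J i) w₁ - gradient (J i) w₂‖ ≤ L * ‖w₁ - w₂‖)
    (S : Fin N → Finset (Fin N)) (hself : ∀ i, i ∈ S i)
    (hpart : ∀ i j, j ∈ S i → S j = S i)
    (a : Fin N → ℝ) (ha : ∀ j, 0 ≤ a j) (hsum : ∀ i, ∑ j ∈ S i, a j = 1)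
    (w : Fin N → EuclideanSpace ℝ (Fin M)) (η : ℝ) (hη : 0 < η)
    {Ω : Type*} [MeasurableSpace Ω] (P : Measure Ω) [IsProbabilityMeasure P]
    (g : Fin N → Ω → EuclideanSpace ℝ (Fin M))
    (hgmeas : ∀ j, Measurable (g j)) (hg2 : ∀ j, MemLp (g j) 2 P)
    (hmean : ∀ j, (∫ ω, g j ω ∂P) = gradient (J j) (w j))
    (σ : ℝ) (hσ : 0 ≤ σ)
    (hvar : ∀ j, (∫ ω, ‖g j ω - gradient (J j) (w j)‖ ^ 2 ∂P) ≤ σ ^ 2) :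
    (∑ i, ∫ ω, J i (w i - η • ∑ j ∈ S i, a j • g j ω) ∂P) - ∑ i, J i (w i) ≤
      -η * (∑ i, ⟪gradient (J i) (w i), ∑ j ∈ S i, a j • gradient (J j) (w j)⟫)
        + L * η ^ 2 / 2 * ∑ i, ‖∑ j ∈ S i, a j • gradient (J j) (w j)‖ ^ 2
        + L * η ^ 2 * N / 2 * σ ^ 2 := by
  have hsq_int : ∀ (f : Ω → EuclideanSpace ℝ (Fin M)), MemLp f 2 P →
      Integrable (fun ω => ‖f ω‖ ^ 2) P := by
    intro f hf
    have h := hf.integrable_norm_rpow two_ne_zero ENNReal.ofNat_ne_top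
    have h2 : (2 : ℝ≥0∞).toReal = (2 : ℝ) := by simp
    rw [h2] at h
    convert h using 2 with ω
    rw [← Real.rpow_natCast]; norm_num
  have per_i : ∀ i : Fin N,
      (∫ ω, J i (w i - η • ∑ j ∈ S i, a j • g j ω) ∂P) ≤
        J i (w i) - η * ⟪gradient (J i) (w i), ∑ j ∈ S i, a j • gradient (J j) (w j)⟫
          + L * η ^ 2 / 2 * (‖∑ j ∈ S i, a j • gradient (J j) (w j)‖ ^ 2 + σ ^ 2) := by
    intro i
    set G : EuclideanSpace ℝ (Fin M) := gradient (J i) (w i) with hG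
    set D : EuclideanSpace ℝ (Fin M) := ∑ j ∈ S i, a j • gradient (J j) (w j) with hD
    set d : Ω → EuclideanSpace ℝ (Fin M) := fun ω => ∑ j ∈ S i, a j • g j ω with hd
    show (∫ ω, J i (w i - η • d ω) ∂P) ≤ J i (w i) - η * ⟪G, D⟫ + L * η ^ 2 / 2 * (‖D‖ ^ 2 + σ ^ 2)
    have hd2 : MemLp d 2 P :=
      memLp_finset_sum (S i) (fun j _ => (hg2 j).const_smul (a j))
    have hdint : Integrable d P := hd2.integrable one_le_two
    have hdmean : (∫ ω, d ω ∂P) = D := by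
      rw [hd]
      show (∫ ω, ∑ j ∈ S i, a j • g j ω ∂P) = D
      rw [integral_finset_sum _
        (fun j _ => by exact ((hg2 j).integrable one_le_two).smul (a j) :
          ∀ j ∈ S i, Integrable (fun ω => a j • g j ω) P)]
      simp_rw [integral_smul]
      exact Finset.sum_congr rfl fun j _ => by rw [hmean j]
    have hnorm2 : Integrable (fun ω => ‖d ω‖ ^ 2) P := hsq_int d hd2
    have hinner : Integrable (fun ω => ⟪G, d ω⟫) P := hdint.const_inner G
    -- pointwise descent bound
    have habs : ∀ ω, |J i (w i - η • d ω) - (J i (w i) - η * ⟪G, d ω⟫)| ≤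
        L * η ^ 2 / 2 * ‖d ω‖ ^ 2 := by
      intro ω
      have h := descent_abs (J i) L hL.le (hdiff i) (hlip i) (w i) (w i - η • d ω)
      have h1 : (w i - η • d ω) - w i = -(η • d ω) := by abel
      rw [h1, inner_neg_right, real_inner_smul_right] at h
      have h2 : ‖-(η • d ω)‖ ^ 2 = η ^ 2 * ‖d ω‖ ^ 2 := by
        rw [norm_neg, norm_smul, Real.norm_eq_abs, mul_pow, sq_abs]
      rw [h2] at h
      calc |J i (w i - η • d ω) - (J i (w i) - η * ⟪G, d ω⟫)|
          = |J i (w i - η • d ω) - J i (w i) - -(η * ⟪G, d ω⟫)| := by ring_nf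
        _ ≤ L / 2 * (η ^ 2 * ‖d ω‖ ^ 2) := h
        _ = L * η ^ 2 / 2 * ‖d ω‖ ^ 2 := by ring
    have hmeasd : Measurable d :=
      Finset.measurable_sum _ (fun j _ => (hgmeas j).const_smul (a j))
    have hJmeas : AEStronglyMeasurable (fun ω => J i (w i - η • d ω)) P :=
      ((hdiff i).continuous.measurable.comp
        (measurable_const.sub (hmeasd.const_smul η))).aestronglyMeasurable
    have hbound_int : Integrable (fun ω =>
        |J i (w i)| + η * |⟪G, d ω⟫| + L * η ^ 2 / 2 * ‖d ω‖ ^ 2) P :=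
      ((integrable_const _).add ((hinner.abs).const_mul η)).add (hnorm2.const_mul _)
    have hJint : Integrable (fun ω => J i (w i - η • d ω)) P := by
      refine Integrable.mono' hbound_int hJmeas (Filter.Eventually.of_forall fun ω => ?_)
      have h := habs ω
      have h3 : |⟪G, d ω⟫| * η = η * |⟪G, d ω⟫| := mul_comm _ _
      calc ‖J i (w i - η • d ω)‖ = |J i (w i - η • d ω)| := rfl
        _ ≤ |J i (w i - η • d ω) - (J i (w i) - η * ⟪G, d ω⟫)| + |J i (w i) - η * ⟪G, d ω⟫| := by
            have h4 := abs_add_le (J i (w i - η • d ω) - (J i (w i) - η * ⟪G, d ω⟫))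
              (J i (w i) - η * ⟪G, d ω⟫)
            simpa using h4
        _ ≤ L * η ^ 2 / 2 * ‖d ω‖ ^ 2 + (|J i (w i)| + η * |⟪G, d ω⟫|) := by
            refine add_le_add h ?_
            refine (abs_sub _ _).trans ?_
            rw [abs_mul, abs_of_pos hη]
        _ = |J i (w i)| + η * |⟪G, d ω⟫| + L * η ^ 2 / 2 * ‖d ω‖ ^ 2 := by ring
    have hdesc : ∀ ω, J i (w i - η • d ω) ≤
        J i (w i) - η * ⟪G, d ω⟫ + L * η ^ 2 / 2 * ‖d ω‖ ^ 2 := fun ω => by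
      have := (abs_le.mp (habs ω)).2; linarith
    have hub : Integrable (fun ω =>
        J i (w i) - η * ⟪G, d ω⟫ + L * η ^ 2 / 2 * ‖d ω‖ ^ 2) P :=
      ((integrable_const _).sub (hinner.const_mul η)).add (hnorm2.const_mul _)
    have hmono : (∫ ω, J i (w i - η • d ω) ∂P) ≤
        ∫ ω, (J i (w i) - η * ⟪G, d ω⟫ + L * η ^ 2 / 2 * ‖d ω‖ ^ 2) ∂P :=
      integral_mono hJint hub hdesc
    have heval : (∫ ω, (J i (w i) - η * ⟪G, d ω⟫ + L * η ^ 2 / 2 * ‖d ω‖ ^ 2) ∂P)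
        = J i (w i) - η * ⟪G, D⟫ + L * η ^ 2 / 2 * ∫ ω, ‖d ω‖ ^ 2 ∂P := by
      have hf1 : Integrable (fun ω => J i (w i) - η * ⟪G, d ω⟫) P :=
        (integrable_const _).sub (hinner.const_mul η)
      have hf2 : Integrable (fun ω => L * η ^ 2 / 2 * ‖d ω‖ ^ 2) P := hnorm2.const_mul _
      rw [integral_add hf1 hf2,
        integral_sub (integrable_const _) (hinner.const_mul η), integral_const,
        integral_const_mul, integral_const_mul, integral_inner hdint, hdmean]
      simp
    -- second moment bound
    have hdD_int : Integrable (fun ω => d ω - D) P := hdint.sub (integrable_const _)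
    have hdD2 : MemLp (fun ω => d ω - D) 2 P := hd2.sub (memLp_const _)
    have hdDnorm2 : Integrable (fun ω => ‖d ω - D‖ ^ 2) P := hsq_int _ hdD2
    have hvar_i : (∫ ω, ‖d ω - D‖ ^ 2 ∂P) ≤ σ ^ 2 := by
      have hgj2 : ∀ j, Integrable (fun ω => ‖g j ω - gradient (J j) (w j)‖ ^ 2) P :=
        fun j => hsq_int _ ((hg2 j).sub (memLp_const _))
      have hptw : ∀ ω, ‖d ω - D‖ ^ 2 ≤
          ∑ j ∈ S i, a j * ‖g j ω - gradient (J j) (w j)‖ ^ 2 := by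
        intro ω
        have heq : d ω - D = ∑ j ∈ S i, a j • (g j ω - gradient (J j) (w j)) := by
          rw [hd, hD]
          simp [smul_sub, Finset.sum_sub_distrib]
        rw [heq]
        exact jensen_sq_norm (S i) a ha (hsum i) _
      calc (∫ ω, ‖d ω - D‖ ^ 2 ∂P)
          ≤ ∫ ω, ∑ j ∈ S i, a j * ‖g j ω - gradient (J j) (w j)‖ ^ 2 ∂P :=
            integral_mono hdDnorm2
              (integrable_finset_sum _ fun j _ => (hgj2 j).const_mul (a j)) hptw
        _ = ∑ j ∈ S i, a j * ∫ ω, ‖g j ω - gradient (J j) (w j)‖ ^ 2 ∂P := by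
            rw [integral_finset_sum _ fun j _ => (hgj2 j).const_mul (a j)]
            exact Finset.sum_congr rfl fun j _ => integral_const_mul _ _
        _ ≤ ∑ j ∈ S i, a j * σ ^ 2 :=
            Finset.sum_le_sum fun j _ => mul_le_mul_of_nonneg_left (hvar j) (ha j)
        _ = σ ^ 2 := by rw [← Finset.sum_mul, hsum i, one_mul]
    have hcross : (∫ ω, ⟪D, d ω - D⟫ ∂P) = 0 := by
      rw [integral_inner hdD_int, integral_sub hdint (integrable_const _), hdmean, integral_const]
      simp
    have hcross_int : Integrable (fun ω => 2 * ⟪D, d ω - D⟫) P :=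
      (hdD_int.const_inner D).const_mul 2
    have hmom : (∫ ω, ‖d ω‖ ^ 2 ∂P) ≤ ‖D‖ ^ 2 + σ ^ 2 := by
      have hpt : ∀ ω, ‖d ω‖ ^ 2 = ‖d ω - D‖ ^ 2 + 2 * ⟪D, d ω - D⟫ + ‖D‖ ^ 2 := by
        intro ω
        have h := norm_add_sq_real (d ω - D) D
        rw [sub_add_cancel] at h
        rw [h, real_inner_comm]
      calc (∫ ω, ‖d ω‖ ^ 2 ∂P)
          = ∫ ω, (‖d ω - D‖ ^ 2 + 2 * ⟪D, d ω - D⟫ + ‖D‖ ^ 2) ∂P :=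
            integral_congr_ae (Filter.Eventually.of_forall hpt)
        _ = (∫ ω, ‖d ω - D‖ ^ 2 ∂P) + (∫ ω, 2 * ⟪D, d ω - D⟫ ∂P) + ‖D‖ ^ 2 := by
            have hf1 : Integrable (fun ω => ‖d ω - D‖ ^ 2 + 2 * ⟪D, d ω - D⟫) P :=
              hdDnorm2.add hcross_int
            rw [integral_add hf1 (integrable_const _),
              integral_add hdDnorm2 hcross_int, integral_const]
            simp
        _ = (∫ ω, ‖d ω - D‖ ^ 2 ∂P) + ‖D‖ ^ 2 := by
            rw [integral_const_mul, hcross]; ring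
        _ ≤ σ ^ 2 + ‖D‖ ^ 2 := by linarith [hvar_i]
        _ = ‖D‖ ^ 2 + σ ^ 2 := by ring
    have hc : (0:ℝ) ≤ L * η ^ 2 / 2 := by positivity
    calc (∫ ω, J i (w i - η • d ω) ∂P)
        ≤ J i (w i) - η * ⟪G, D⟫ + L * η ^ 2 / 2 * ∫ ω, ‖d ω‖ ^ 2 ∂P := by
          rw [← heval]; exact hmono
      _ ≤ J i (w i) - η * ⟪G, D⟫ + L * η ^ 2 / 2 * (‖D‖ ^ 2 + σ ^ 2) := by
          have := mul_le_mul_of_nonneg_left hmom hc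
          linarith
  have hsum_le : (∑ i, ∫ ω, J i (w i - η • ∑ j ∈ S i, a j • g j ω) ∂P) ≤
      ∑ i, (J i (w i) - η * ⟪gradient (J i) (w i), ∑ j ∈ S i, a j • gradient (J j) (w j)⟫
        + L * η ^ 2 / 2 * (‖∑ j ∈ S i, a j • gradient (J j) (w j)‖ ^ 2 + σ ^ 2)) :=
    Finset.sum_le_sum fun i _ => per_i i
  have hexp : ∑ i, (J i (w i) - η * ⟪gradient (J i) (w i), ∑ j ∈ S i, a j • gradient (J j) (w j)⟫
        + L * η ^ 2 / 2 * (‖∑ j ∈ S i, a j • gradient (J j) (w j)‖ ^ 2 + σ ^ 2))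
      = (∑ i, J i (w i))
        + (-η * (∑ i, ⟪gradient (J i) (w i), ∑ j ∈ S i, a j • gradient (J j) (w j)⟫)
          + L * η ^ 2 / 2 * ∑ i, ‖∑ j ∈ S i, a j • gradient (J j) (w j)‖ ^ 2
          + L * η ^ 2 * N / 2 * σ ^ 2) := by
    rw [Finset.sum_add_distrib, Finset.sum_sub_distrib]
    simp_rw [mul_add, Finset.sum_add_distrib, Finset.sum_const, Finset.card_univ,
      Fintype.card_fin, nsmul_eq_mul, ← Finset.mul_sum]
    ring
  linarith [hsum_le]
end

section
/- Let E = EuclideanSpace ℝ (Fin M). Fix scalars η_0, …, η_{t−1} ≥ 0, deterministic drift vectors u_s, u_s' ∈ E with ‖u_s − u_s'‖ ≤ κ_s for each s < t, and on a probability space let ξ_0, ξ_0', …, ξ_{t−1}, ξ_{t−1}' : Ω → E be square-integrable random vectors such that 𝔼[ξ_s] = 𝔼[ξ_s'] = 0, 𝔼[‖ξ_s‖²] ≤ σ² and 𝔼[‖ξ_s'‖²] ≤ σ², and the differences ζ_s := ξ_s − ξ_s' (s = 0, …, t−1) are independent. Define two iterate sequences from a common initialization w⁰ = w'⁰ ∈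 E by w^{s+1} = w^s − η_s (u_s + ξ_s) and w'^{s+1} = w'^s − η_s (u_s' + ξ_s'). Then 𝔼[ ‖w^t − w'^t‖² ] ≤ 2 (Σ_{s=0}^{t−1} η_s κ_s)² + 8 Σ_{s=0}^{t−1} η_s² σ². (A corrected form of inequality (39): the divergence between two clients' model iterates is controlled by the accumulated gradient dissimilarity κ_s and the accumulated stochastic-gradient variance σ².) -/
open MeasureTheory ProbabilityTheory

section Aux

variable {Ω : Type*} [MeasurableSpace Ω] {P : Measure Ω}

lemma aux_integrable_inner {E : Type*} [NormedAddCommGroup E] [InnerProductSpace ℝ E]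
    {f g : Ω → E} (hf : MemLp f 2 P) (hg : MemLp g 2 P) :
    Integrable (fun ω => (inner ℝ (f ω) (g ω) : ℝ)) P := by
  have h := MeasureTheory.L2.integrable_inner (𝕜 := ℝ) (hf.toLp f) (hg.toLp g)
  refine h.congr ?_
  filter_upwards [hf.coeFn_toLp, hg.coeFn_toLp] with ω h1 h2
  rw [h1, h2]

end Aux

/-- A corrected form of inequality (39): two clients' SGD iterates start from the same
initialization `w⁰` and evolve by `w^{s+1} = w^s − η_s (u_s + ξ_s)` and
`w'^{s+1} = w'^s − η_s (u_s' + ξ_s')`, where the deterministic drifts satisfy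
`‖u_s − u_s'‖ ≤ κ_s`, the noises are zero-mean with second moment at most `σ²`, and the noise
differences `ξ_s − ξ_s'` are independent across iterations.  Then the divergence of the iterates
satisfies `𝔼[‖w^t − w'^t‖²] ≤ 2 (Σ_s η_s κ_s)² + 8 Σ_s η_s² σ²`. -/
theorem iterate_divergence_bound
    {M t : ℕ} {Ω : Type*} [MeasurableSpace Ω] (P : Measure Ω) [IsProbabilityMeasure P]
    (η κ : ℕ → ℝ) (hη : ∀ s < t, 0 ≤ η s)
    (u u' : ℕ → EuclideanSpace ℝ (Fin M))
    (hdrift : ∀ s < t, ‖u s - u' s‖ ≤ κ s)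
    (ξ ξ' : ℕ → Ω → EuclideanSpace ℝ (Fin M))
    (σ : ℝ) (hσ : 0 ≤ σ)
    (h2 : ∀ s < t, MemLp (ξ s) 2 P ∧ MemLp (ξ' s) 2 P)
    (hmean : ∀ s < t, (∫ ω, ξ s ω ∂P) = 0 ∧ (∫ ω, ξ' s ω ∂P) = 0)
    (hvar : ∀ s < t, (∫ ω, ‖ξ s ω‖ ^ 2 ∂P) ≤ σ ^ 2 ∧ (∫ ω, ‖ξ' s ω‖ ^ 2 ∂P) ≤ σ ^ 2)
    (hindep : iIndepFun
      (fun s : Fin t => fun ω => ξ s ω - ξ' s ω) P)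
    (w0 : EuclideanSpace ℝ (Fin M))
    (w w' : ℕ → Ω → EuclideanSpace ℝ (Fin M))
    (hw0 : ∀ ω, w 0 ω = w0) (hw0' : ∀ ω, w' 0 ω = w0)
    (hstep : ∀ s < t, ∀ ω, w (s + 1) ω = w s ω - η s • (u s + ξ s ω))
    (hstep' : ∀ s < t, ∀ ω, w' (s + 1) ω = w' s ω - η s • (u' s + ξ' s ω)) :
    (∫ ω, ‖w t ω - w' t ω‖ ^ 2 ∂P) ≤
      2 * (∑ s ∈ Finset.range t, η s * κ s) ^ 2 +
        8 * ∑ s ∈ Finset.range t, η s ^ 2 * σ ^ 2 := by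
  classical
  set ζ : ℕ → Ω → EuclideanSpace ℝ (Fin M) := fun s ω => ξ s ω - ξ' s ω with hζdef
  have hζ2 : ∀ s < t, MemLp (ζ s) 2 P := fun s hs => (h2 s hs).1.sub (h2 s hs).2
  have hζint : ∀ s < t, Integrable (ζ s) P := fun s hs =>
    (hζ2 s hs).integrable (by norm_num)
  have hζmean : ∀ s < t, (∫ ω, ζ s ω ∂P) = 0 := by
    intro s hs
    have h1 : Integrable (ξ s) P := (h2 s hs).1.integrable (by norm_num)
    have h2' : Integrable (ξ' s) P := (h2 s hs).2.integrable (by norm_num)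
    simp only [hζdef]
    rw [integral_sub h1 h2', (hmean s hs).1, (hmean s hs).2, sub_zero]
  have hζvar : ∀ s < t, (∫ ω, ‖ζ s ω‖ ^ 2 ∂P) ≤ 4 * σ ^ 2 := by
    intro s hs
    have A : Integrable (fun ω => ‖ξ s ω‖ ^ 2) P :=
      (memLp_two_iff_integrable_sq_norm (h2 s hs).1.aestronglyMeasurable).mp (h2 s hs).1
    have B : Integrable (fun ω => ‖ξ' s ω‖ ^ 2) P :=
      (memLp_two_iff_integrable_sq_norm (h2 s hs).2.aestronglyMeasurable).mp (h2 s hs).2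
    have hmono : (∫ ω, ‖ζ s ω‖ ^ 2 ∂P) ≤ ∫ ω, 2 * ‖ξ s ω‖ ^ 2 + 2 * ‖ξ' s ω‖ ^ 2 ∂P := by
      apply integral_mono
      · exact (memLp_two_iff_integrable_sq_norm (hζ2 s hs).aestronglyMeasurable).mp (hζ2 s hs)
      · exact (A.const_mul 2).add (B.const_mul 2)
      · intro ω
        have h := norm_sub_le (ξ s ω) (ξ' s ω)
        have := norm_nonneg (ξ s ω)
        have := norm_nonneg (ξ' s ω)
        have := norm_nonneg (ξ s ω - ξ' s ω)
        simp only [hζdef]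
        nlinarith [pow_le_pow_left₀ (norm_nonneg (ξ s ω - ξ' s ω)) h 2,
          sq_nonneg (‖ξ s ω‖ - ‖ξ' s ω‖)]
    rw [integral_add (A.const_mul 2) (B.const_mul 2), integral_const_mul, integral_const_mul]
      at hmono
    have := (hvar s hs).1
    have := (hvar s hs).2
    linarith
  -- cross terms vanish
  have hcross : ∀ i j, i < t → j < t → i ≠ j →
      (∫ ω, (inner ℝ (ζ i ω) (ζ j ω) : ℝ) ∂P) = 0 := by
    intro i j hi hj hij
    have hind : IndepFun (ζ i) (ζ j) P :=
      hindep.indepFun (i := ⟨i, hi⟩) (j := ⟨j, hj⟩) (by simp [Fin.ext_iff, hij])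
    have hcompmem : ∀ s (hs : s < t) (k : Fin M), MemLp (fun ω => ζ s ω k) 2 P := by
      intro s hs k
      exact (EuclideanSpace.proj k : EuclideanSpace ℝ (Fin M) →L[ℝ] ℝ).comp_memLp' (hζ2 s hs)
    have hcompmean : ∀ s (hs : s < t) (k : Fin M), (∫ ω, ζ s ω k ∂P) = 0 := by
      intro s hs k
      have h0 := (EuclideanSpace.proj k : EuclideanSpace ℝ (Fin M) →L[ℝ] ℝ).integral_comp_comm
        (hζint s hs)
      rw [hζmean s hs, map_zero] at h0
      exact h0
    have hexp : ∀ ω, (inner ℝ (ζ i ω) (ζ j ω) : ℝ) = ∑ k : Fin M, ζ i ω k * ζ j ω k := by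
      intro ω
      simp [PiLp.inner_apply, RCLike.inner_apply, conj_trivial, mul_comm]
    calc (∫ ω, (inner ℝ (ζ i ω) (ζ j ω) : ℝ) ∂P)
        = ∫ ω, ∑ k : Fin M, ζ i ω k * ζ j ω k ∂P := by simp_rw [hexp]
      _ = ∑ k : Fin M, ∫ ω, ζ i ω k * ζ j ω k ∂P := by
          apply integral_finset_sum
          intro k _
          simpa [RCLike.inner_apply, conj_trivial, mul_comm] using
            aux_integrable_inner (hcompmem i hi k) (hcompmem j hj k)
      _ = 0 := by
          apply Finset.sum_eq_zero
          intro k _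
          have hik : IndepFun (fun ω => ζ i ω k) (fun ω => ζ j ω k) P :=
            hind.comp (φ := fun x : EuclideanSpace ℝ (Fin M) => x k)
              (ψ := fun x : EuclideanSpace ℝ (Fin M) => x k) (by fun_prop) (by fun_prop)
          have := hik.integral_mul_eq_mul_integral (hcompmem i hi k).aestronglyMeasurable
            (hcompmem j hj k).aestronglyMeasurable
          simpa [hcompmean i hi k, hcompmean j hj k] using this
  -- the iterate difference identity
  have hiter : ∀ ω, ∀ n, n ≤ t →
      w n ω - w' n ω = -(∑ s ∈ Finset.range n, η s • ((u s - u' s) + ζ s ω)) := by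
    intro ω n
    induction n with
    | zero => intro _; simp [hw0, hw0']
    | succ n ih =>
      intro hn
      have hn' : n < t := hn
      rw [hstep n hn' ω, hstep' n hn' ω, Finset.sum_range_succ, sub_sub_sub_comm,
        ih (le_of_lt hn')]
      simp only [hζdef, smul_add, smul_sub]
      abel
  set D : EuclideanSpace ℝ (Fin M) := ∑ s ∈ Finset.range t, η s • (u s - u' s) with hD
  set Z : Ω → EuclideanSpace ℝ (Fin M) := fun ω => ∑ s ∈ Finset.range t, η s • ζ s ω with hZ
  have hwt : ∀ ω, ‖w t ω - w' t ω‖ = ‖D + Z ω‖ := by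
    intro ω
    rw [hiter ω t le_rfl, norm_neg, hD, hZ]
    congr 1
    rw [← Finset.sum_add_distrib]
    exact Finset.sum_congr rfl fun s _ => by rw [smul_add]
  have hZ2 : MemLp Z 2 P := by
    rw [hZ]
    exact memLp_finset_sum (Finset.range t)
      (fun s hs => (hζ2 s (Finset.mem_range.mp hs)).const_smul (η s))
  have hZsq_int : Integrable (fun ω => ‖Z ω‖ ^ 2) P :=
    (memLp_two_iff_integrable_sq_norm hZ2.aestronglyMeasurable).mp hZ2
  -- variance of Z
  have hZvar : (∫ ω, ‖Z ω‖ ^ 2 ∂P) ≤ ∑ s ∈ Finset.range t, η s ^ 2 * (4 * σ ^ 2) := by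
    have hterm_int : ∀ i ∈ Finset.range t, ∀ j ∈ Finset.range t,
        Integrable (fun ω => (inner ℝ (η i • ζ i ω) (η j • ζ j ω) : ℝ)) P := by
      intro i hi j hj
      exact aux_integrable_inner
        ((hζ2 i (Finset.mem_range.mp hi)).const_smul (η i))
        ((hζ2 j (Finset.mem_range.mp hj)).const_smul (η j))
    have hexp : ∀ ω, ‖Z ω‖ ^ 2 =
        ∑ i ∈ Finset.range t, ∑ j ∈ Finset.range t,
          (inner ℝ (η i • ζ i ω) (η j • ζ j ω) : ℝ) := by
      intro ω
      rw [← real_inner_self_eq_norm_sq, hZ]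
      simp only
      rw [sum_inner]
      exact Finset.sum_congr rfl fun i _ => by rw [inner_sum]
    calc (∫ ω, ‖Z ω‖ ^ 2 ∂P)
        = ∑ i ∈ Finset.range t, ∑ j ∈ Finset.range t,
            ∫ ω, (inner ℝ (η i • ζ i ω) (η j • ζ j ω) : ℝ) ∂P := by
          simp_rw [hexp]
          rw [integral_finset_sum _ fun i hi =>
            integrable_finset_sum _ fun j hj => hterm_int i hi j hj]
          exact Finset.sum_congr rfl fun i hi =>
            integral_finset_sum _ fun j hj => hterm_int i hi j hj
      _ = ∑ i ∈ Finset.range t, ∫ ω, (inner ℝ (η i • ζ i ω) (η i • ζ i ω) : ℝ) ∂P := by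
          apply Finset.sum_congr rfl
          intro i hi
          apply Finset.sum_eq_single_of_mem i hi
          intro j hj hij
          have : (fun ω => (inner ℝ (η i • ζ i ω) (η j • ζ j ω) : ℝ)) =
              fun ω => (η i * η j) * (inner ℝ (ζ i ω) (ζ j ω) : ℝ) := by
            funext ω
            rw [real_inner_smul_left, real_inner_smul_right]
            ring
          rw [this, integral_const_mul,
            hcross i j (Finset.mem_range.mp hi) (Finset.mem_range.mp hj)
              (Ne.symm hij), mul_zero]
      _ ≤ ∑ i ∈ Finset.range t, η i ^ 2 * (4 * σ ^ 2) := by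
          apply Finset.sum_le_sum
          intro i hi
          have hi' := Finset.mem_range.mp hi
          have : (fun ω => (inner ℝ (η i • ζ i ω) (η i • ζ i ω) : ℝ)) =
              fun ω => η i ^ 2 * ‖ζ i ω‖ ^ 2 := by
            funext ω
            rw [real_inner_smul_left, real_inner_smul_right, real_inner_self_eq_norm_sq]
            ring
          rw [this, integral_const_mul]
          have := hζvar i hi'
          nlinarith [sq_nonneg (η i)]
  -- the drift bound
  have hDnorm : ‖D‖ ≤ ∑ s ∈ Finset.range t, η s * κ s := by
    refine le_trans (norm_sum_le _ _) (Finset.sum_le_sum fun s hs => ?_)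
    have hs' := Finset.mem_range.mp hs
    rw [norm_smul, Real.norm_eq_abs, abs_of_nonneg (hη s hs')]
    exact mul_le_mul_of_nonneg_left (hdrift s hs') (hη s hs')
  have hK : 0 ≤ ∑ s ∈ Finset.range t, η s * κ s := le_trans (norm_nonneg D) hDnorm
  -- final pointwise bound and integration
  have hpt : ∀ ω, ‖w t ω - w' t ω‖ ^ 2 ≤
      2 * (∑ s ∈ Finset.range t, η s * κ s) ^ 2 + 2 * ‖Z ω‖ ^ 2 := by
    intro ω
    rw [hwt ω]
    have h1 : ‖D + Z ω‖ ≤ (∑ s ∈ Finset.range t, η s * κ s) + ‖Z ω‖ :=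
      le_trans (norm_add_le _ _) (add_le_add_left hDnorm _)
    have h2' := norm_nonneg (D + Z ω)
    have h3 := norm_nonneg (Z ω)
    nlinarith [pow_le_pow_left₀ h2' h1 2,
      sq_nonneg ((∑ s ∈ Finset.range t, η s * κ s) - ‖Z ω‖)]
  have hint : (∫ ω, ‖w t ω - w' t ω‖ ^ 2 ∂P) ≤
      ∫ ω, 2 * (∑ s ∈ Finset.range t, η s * κ s) ^ 2 + 2 * ‖Z ω‖ ^ 2 ∂P := by
    apply integral_mono_of_nonneg
    · exact Filter.Eventually.of_forall fun ω => sq_nonneg _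
    · exact (integrable_const _).add (hZsq_int.const_mul 2)
    · exact Filter.Eventually.of_forall hpt
  rw [integral_add (integrable_const _) (hZsq_int.const_mul 2), integral_const,
    integral_const_mul] at hint
  simp only [probReal_univ, smul_eq_mul, one_mul] at hint
  have : (∫ ω, ‖Z ω‖ ^ 2 ∂P) ≤ ∑ s ∈ Finset.range t, η s ^ 2 * (4 * σ ^ 2) := hZvar
  have hsum : (8 : ℝ) * ∑ s ∈ Finset.range t, η s ^ 2 * σ ^ 2 =
      2 * ∑ s ∈ Finset.range t, η s ^ 2 * (4 * σ ^ 2) := by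
    rw [Finset.mul_sum, Finset.mul_sum]
    exact Finset.sum_congr rfl fun s _ => by ring
  linarith
end
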